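/- Let (Ω, 𝔉, μ) be a probability space, (E_m)_{m≥1} an i.i.d. sequence of exponential random variables with rate 1, and W = (2/π²) Σ_{m=1}^∞ E_m/(2m−1)². Then for every a ∈ {0,1} and every x ∈ ℝ, the Bernoulli logit likelihood admits the Gaussian scale-mixture representation (e^x)^a/(1+e^x) = (1/2)·e^{(a−1/2)x}·E[exp(−x²W/2)]. -/

import Mathlib

open MeasureTheory ProbabilityTheory Real Filter Finset Set
open scoped ENNReal NNReal

/-- Let `(E_m)` be i.i.d. exponential rate-1 random variables on a probability space and
`W = (2 / π²) ∑' m, E m / (2m + 1)²` (the PG(1,0) random variable). Then for every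
`a ∈ {0, 1}` and every `x ∈ ℝ`, the Bernoulli logit likelihood admits the Gaussian
scale-mixture representation
`(e^x)^a / (1 + e^x) = (1/2) · e^{(a - 1/2) x} · E[exp (-x² W / 2)]`. -/
lemma aux_expMeasure_Iio : expMeasure 1 (Set.Iio 0) = 0 := by
  rw [expMeasure, gammaMeasure, withDensity_apply _ measurableSet_Iio]
  exact lintegral_gammaPDF_of_nonpos le_rfl

lemma aux_pdf_meas : Measurable (exponentialPDF 1) :=
  (measurable_exponentialPDFReal 1).ennreal_ofReal

lemma aux_expMeasure_eq : expMeasure 1 = volume.withDensity (exponentialPDF 1) := rfl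

lemma aux_integral_exp_neg (b : ℝ) (hb : 0 ≤ b) :
    ∫ y, Real.exp (-(b * y)) ∂(expMeasure 1) = (1 + b)⁻¹ := by
  have h1b : (0:ℝ) < 1 + b := by linarith
  have hg : ∀ y : ℝ, exponentialPDF 1 y * ENNReal.ofReal (Real.exp (-(b * y)))
      = ENNReal.ofReal (Set.indicator (Ici 0) (fun y => Real.exp (-((1 + b) * y))) y) := by
    intro y
    rcases le_or_gt 0 y with hy | hy
    · rw [exponentialPDF_of_nonneg hy, Set.indicator_of_mem (Set.mem_Ici.mpr hy),
        ← ENNReal.ofReal_mul (by positivity)]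
      congr 1
      rw [one_mul, ← Real.exp_add]
      ring_nf
    · rw [exponentialPDF_of_neg hy, Set.indicator_of_notMem (by simpa using hy), zero_mul,
        ENNReal.ofReal_zero]
  have hintOn : IntegrableOn (fun y => Real.exp (-((1 + b) * y))) (Ici 0) := by
    rw [integrableOn_Ici_iff_integrableOn_Ioi]
    have := exp_neg_integrableOn_Ioi 0 h1b
    refine this.congr_fun (fun y _ => by ring_nf) measurableSet_Ioi
  have hint : Integrable (Set.indicator (Ici 0) (fun y => Real.exp (-((1 + b) * y)))) := by
    rw [integrable_indicator_iff measurableSet_Ici]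
    exact hintOn
  have hnn : 0 ≤ᵐ[volume] Set.indicator (Ici 0) (fun y => Real.exp (-((1 + b) * y))) :=
    Filter.Eventually.of_forall fun y => Set.indicator_nonneg (fun y _ => (exp_pos _).le) y
  rw [integral_eq_lintegral_of_nonneg_ae (Filter.Eventually.of_forall fun y => (exp_pos _).le)
    (Continuous.aestronglyMeasurable (by continuity))]
  rw [aux_expMeasure_eq, lintegral_withDensity_eq_lintegral_mul _ aux_pdf_meas
    ((Continuous.measurable (by continuity)).ennreal_ofReal : Measurable fun y : ℝ => ENNReal.ofReal (Real.exp (-(b * y))))]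
  simp only [Pi.mul_apply]
  rw [lintegral_congr hg, ← ofReal_integral_eq_lintegral_ofReal hint hnn,
    ENNReal.toReal_ofReal (integral_nonneg (fun y => Set.indicator_nonneg (fun y _ => (exp_pos _).le) y))]
  rw [integral_indicator measurableSet_Ici, integral_Ici_eq_integral_Ioi]
  have := integral_comp_mul_left_Ioi (fun u => Real.exp (-u)) 0 h1b
  simp only [mul_zero] at this
  rw [this, integral_exp_neg_Ioi, smul_eq_mul]
  simp

lemma aux_moment : ∫⁻ y, (‖y‖₊ : ℝ≥0∞) ∂(expMeasure 1) < ⊤ := by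
  have hgi : IntegrableOn (fun y : ℝ => Real.exp (-y) * y) (Ici 0) := by
    rw [integrableOn_Ici_iff_integrableOn_Ioi]
    refine (Real.GammaIntegral_convergent (by norm_num : (0:ℝ) < 2)).congr_fun
      (fun y hy => ?_) measurableSet_Ioi
    norm_num
  have hint : Integrable (Set.indicator (Ici 0) (fun y : ℝ => Real.exp (-y) * y)) := by
    rw [integrable_indicator_iff measurableSet_Ici]; exact hgi
  have hnn : 0 ≤ᵐ[volume] Set.indicator (Ici 0) (fun y : ℝ => Real.exp (-y) * y) :=
    Filter.Eventually.of_forall fun y =>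
      Set.indicator_nonneg (fun y hy => mul_nonneg (exp_pos _).le hy) y
  have hg : ∀ y : ℝ, exponentialPDF 1 y * (‖y‖₊ : ℝ≥0∞)
      = ENNReal.ofReal (Set.indicator (Ici 0) (fun y : ℝ => Real.exp (-y) * y) y) := by
    intro y
    rcases le_or_gt 0 y with hy | hy
    · rw [exponentialPDF_of_nonneg hy, Set.indicator_of_mem (Set.mem_Ici.mpr hy),
        ← enorm_eq_nnnorm, Real.enorm_eq_ofReal hy, ← ENNReal.ofReal_mul (by positivity)]
      norm_num
    · rw [exponentialPDF_of_neg hy, Set.indicator_of_notMem (by simpa using hy), zero_mul,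
        ENNReal.ofReal_zero]
  rw [aux_expMeasure_eq, lintegral_withDensity_eq_lintegral_mul _ aux_pdf_meas (g := fun y : ℝ => (‖y‖₊ : ℝ≥0∞)) measurable_enorm]
  simp only [Pi.mul_apply]
  rw [lintegral_congr hg, ← ofReal_integral_eq_lintegral_ofReal hint hnn]
  exact ENNReal.ofReal_lt_top

lemma aux_sinh_prod (t : ℝ) :
    Tendsto (fun n : ℕ => t * ∏ j ∈ Finset.range n, (1 + t ^ 2 / (π ^ 2 * ((j : ℝ) + 1) ^ 2)))
      atTop (nhds (Real.sinh t)) := by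
  have hπ : (π : ℂ) ≠ 0 := Complex.ofReal_ne_zero.mpr Real.pi_ne_zero
  have h := (Complex.continuous_im.tendsto _).comp
      (Complex.tendsto_euler_sin_prod (t * Complex.I / π))
  have hz : (π : ℂ) * (↑t * Complex.I / ↑π) = ↑t * Complex.I := by field_simp
  have hsin : (Complex.sin ((π:ℂ) * (↑t * Complex.I / ↑π))).im = Real.sinh t := by
    rw [hz, Complex.sin_mul_I]
    simp [← Complex.ofReal_sinh]
  rw [hsin] at h
  have hfun : (Complex.im ∘ fun n : ℕ => (π:ℂ) * (↑t * Complex.I / ↑π) *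
      ∏ j ∈ Finset.range n, (1 - (↑t * Complex.I / ↑π) ^ 2 / ((j:ℂ) + 1) ^ 2))
      = fun n : ℕ => t * ∏ j ∈ Finset.range n, (1 + t ^ 2 / (π ^ 2 * ((j : ℝ) + 1) ^ 2)) := by
    funext n
    simp only [Function.comp_apply, hz]
    have h2 : ∀ j ∈ Finset.range n, (1 : ℂ) - (↑t * Complex.I / ↑π) ^ 2 / ((j : ℂ) + 1) ^ 2
        = ((1 + t ^ 2 / (π ^ 2 * ((j : ℝ) + 1) ^ 2) : ℝ) : ℂ) := by
      intro j _
      have hj : ((j : ℂ) + 1) ≠ 0 := Nat.cast_add_one_ne_zero j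
      have hI : (↑t * Complex.I / ↑π) ^ 2 = -((t:ℂ)^2/(π:ℂ)^2) := by
        rw [div_pow, mul_pow, Complex.I_sq]; ring
      rw [hI]
      push_cast
      field_simp
      ring
    rw [Finset.prod_congr rfl h2, ← Complex.ofReal_prod]
    set r : ℝ := ∏ j ∈ Finset.range n, (1 + t ^ 2 / (π ^ 2 * ((j : ℝ) + 1) ^ 2)) with hr
    simp [Complex.mul_im]
  rw [hfun] at h
  exact h

lemma aux_prod_range_two_mul (g : ℕ → ℝ) (n : ℕ) :
    ∏ j ∈ Finset.range (2 * n), g j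
      = (∏ k ∈ Finset.range n, g (2 * k)) * ∏ k ∈ Finset.range n, g (2 * k + 1) := by
  induction n with
  | zero => simp
  | succ n ih =>
    rw [show 2 * (n + 1) = (2 * n + 1) + 1 by ring, Finset.prod_range_succ,
      Finset.prod_range_succ, Finset.prod_range_succ, Finset.prod_range_succ, ih]
    ring

lemma aux_cosh_prod (t : ℝ) :
    Tendsto (fun n : ℕ => ∏ k ∈ Finset.range n, (1 + 4 * t ^ 2 / (π ^ 2 * (2 * (k : ℝ) + 1) ^ 2)))
      atTop (nhds (Real.cosh t)) := by
  rcases eq_or_ne t 0 with rfl | ht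
  · simpa using (tendsto_const_nhds : Tendsto (fun _ : ℕ => (1:ℝ)) atTop _)
  have hπ : π ≠ 0 := Real.pi_ne_zero
  have h1 := (aux_sinh_prod t).const_mul 2
  have h2 : Tendsto (fun n : ℕ => (2 * t) *
      ∏ j ∈ Finset.range (2 * n), (1 + (2 * t) ^ 2 / (π ^ 2 * ((j : ℝ) + 1) ^ 2)))
      atTop (nhds (Real.sinh (2 * t))) :=
    (aux_sinh_prod (2 * t)).comp (tendsto_id.const_mul_atTop' zero_lt_two)
  have hden : ∀ n : ℕ, 2 * (t * ∏ j ∈ Finset.range n, (1 + t ^ 2 / (π ^ 2 * ((j : ℝ) + 1) ^ 2))) ≠ 0 := by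
    intro n
    have hp : 0 < ∏ j ∈ Finset.range n, (1 + t ^ 2 / (π ^ 2 * ((j : ℝ) + 1) ^ 2)) := by
      apply Finset.prod_pos
      intro j _
      have : 0 ≤ t ^ 2 / (π ^ 2 * ((j : ℝ) + 1) ^ 2) := by positivity
      linarith
    positivity
  have hsinh : Real.sinh t ≠ 0 := by
    simpa [Real.sinh_eq_zero] using ht
  have hkey : ∀ n : ℕ, (2 * t) * ∏ j ∈ Finset.range (2 * n), (1 + (2 * t) ^ 2 / (π ^ 2 * ((j : ℝ) + 1) ^ 2))
      = (∏ k ∈ Finset.range n, (1 + 4 * t ^ 2 / (π ^ 2 * (2 * (k : ℝ) + 1) ^ 2)))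
        * (2 * (t * ∏ j ∈ Finset.range n, (1 + t ^ 2 / (π ^ 2 * ((j : ℝ) + 1) ^ 2)))) := by
    intro n
    rw [aux_prod_range_two_mul (fun j => 1 + (2 * t) ^ 2 / (π ^ 2 * ((j : ℝ) + 1) ^ 2)) n]
    have he : ∀ k ∈ Finset.range n,
        (1 + (2 * t) ^ 2 / (π ^ 2 * ((2 * k : ℕ) + 1 : ℝ) ^ 2))
          = 1 + 4 * t ^ 2 / (π ^ 2 * (2 * (k : ℝ) + 1) ^ 2) := by
      intro k _
      push_cast
      ring_nf
    have ho : ∀ k ∈ Finset.range n,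
        (1 + (2 * t) ^ 2 / (π ^ 2 * ((2 * k + 1 : ℕ) + 1 : ℝ) ^ 2))
          = 1 + t ^ 2 / (π ^ 2 * ((k : ℝ) + 1) ^ 2) := by
      intro k _
      have hk : ((k : ℝ) + 1) ≠ 0 := by positivity
      push_cast
      field_simp
      ring
    rw [Finset.prod_congr rfl he, Finset.prod_congr rfl ho]
    ring
  have hmain : Tendsto (fun n : ℕ => ∏ k ∈ Finset.range n, (1 + 4 * t ^ 2 / (π ^ 2 * (2 * (k : ℝ) + 1) ^ 2)))
      atTop (nhds (Real.sinh (2 * t) / (2 * Real.sinh t))) := by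
    have hdiv := h2.div h1 (by simpa using hsinh)
    refine hdiv.congr ?_
    intro n
    simp only [Pi.div_apply]
    rw [hkey n, mul_div_assoc, div_self (hden n), mul_one]
  have : Real.sinh (2 * t) / (2 * Real.sinh t) = Real.cosh t := by
    rw [Real.sinh_two_mul]
    field_simp
  rwa [this] at hmain

theorem bernoulli_logit_pg_mixture
    {Ω : Type*} [MeasurableSpace Ω] (μ : Measure Ω) [IsProbabilityMeasure μ]
    (E : ℕ → Ω → ℝ) (hmeas : ∀ m, Measurable (E m))
    (hindep : iIndepFun E μ)
    (hdist : ∀ m, μ.map (E m) = expMeasure 1)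
    (a : ℝ) (ha : a = 0 ∨ a = 1) (x : ℝ) :
    Real.exp x ^ a / (1 + Real.exp x)
      = (1 / 2) * Real.exp ((a - 1 / 2) * x) *
          ∫ ω, Real.exp (-(x ^ 2 * ((2 / π ^ 2) * ∑' m : ℕ, E m ω / (2 * (m : ℝ) + 1) ^ 2)) / 2) ∂μ := by
  have hπ : π ≠ 0 := Real.pi_ne_zero
  set c : ℝ := x ^ 2 / π ^ 2 with hc
  have hc0 : 0 ≤ c := div_nonneg (sq_nonneg x) (sq_nonneg π)
  set Y : ℕ → Ω → ℝ := fun m ω => E m ω / (2 * (m : ℝ) + 1) ^ 2 with hY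
  have hYmeas : ∀ m, Measurable (Y m) := fun m => (hmeas m).div_const _
  -- a.e. nonneg
  have hnn : ∀ᵐ ω ∂μ, ∀ m, 0 ≤ E m ω := by
    rw [MeasureTheory.ae_all_iff]
    intro m
    rw [ae_iff]
    have hset : {ω | ¬ 0 ≤ E m ω} = E m ⁻¹' (Set.Iio 0) := by ext ω; simp [not_le]
    rw [hset, ← Measure.map_apply (hmeas m) measurableSet_Iio, hdist m]
    exact aux_expMeasure_Iio
  -- summability of weights
  have hwsum : Summable (fun m : ℕ => ((2 * (m : ℝ) + 1) ^ 2)⁻¹) := by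
    have hbase : Summable (fun m : ℕ => (((m : ℝ) + 1) ^ 2)⁻¹) := by
      have := (Real.summable_one_div_nat_pow (p := 2)).mpr one_lt_two
      have h2 := this.comp_injective (add_left_injective 1)
      refine h2.congr fun m => ?_
      simp only [Function.comp_apply, one_div]
      push_cast
      ring
    refine Summable.of_nonneg_of_le (fun m => by positivity) (fun m => ?_) hbase
    have h1 : ((m : ℝ) + 1) ^ 2 ≤ (2 * (m : ℝ) + 1) ^ 2 := by nlinarith [Nat.cast_nonneg (α := ℝ) m]
    exact inv_anti₀ (by positivity) h1
  -- a.e. summable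
  have hae_sum : ∀ᵐ ω ∂μ, Summable (fun m => Y m ω) := by
    have hlint : ∫⁻ ω, ∑' m, (‖Y m ω‖₊ : ℝ≥0∞) ∂μ < ⊤ := by
      rw [lintegral_tsum (f := fun m ω => (‖Y m ω‖₊ : ℝ≥0∞)) (fun m => (hYmeas m).enorm.aemeasurable)]
      have heach : ∀ m : ℕ, ∫⁻ ω, (‖Y m ω‖₊ : ℝ≥0∞) ∂μ
          = (∫⁻ y, (‖y‖₊ : ℝ≥0∞) ∂(expMeasure 1)) * ENNReal.ofReal (((2 * (m : ℝ) + 1) ^ 2)⁻¹) := by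
        intro m
        have hpt : ∀ ω, (‖Y m ω‖₊ : ℝ≥0∞)
            = (‖E m ω‖₊ : ℝ≥0∞) * ENNReal.ofReal (((2 * (m : ℝ) + 1) ^ 2)⁻¹) := by
          intro ω
          rw [hY]
          dsimp only
          rw [div_eq_mul_inv, nnnorm_mul, ENNReal.coe_mul]
          congr 1
          exact Real.enorm_eq_ofReal (by positivity)
        simp_rw [hpt]
        rw [lintegral_mul_const _ (f := fun ω => (‖E m ω‖₊ : ℝ≥0∞)) (hmeas m).enorm]
        congr 1
        rw [← hdist m, lintegral_map (f := fun y : ℝ => (‖y‖₊ : ℝ≥0∞)) measurable_enorm (hmeas m)]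
      simp_rw [heach]
      rw [ENNReal.tsum_mul_left]
      have hksum : ∑' m : ℕ, ENNReal.ofReal (((2 * (m : ℝ) + 1) ^ 2)⁻¹) < ⊤ := by
        rw [← ENNReal.ofReal_tsum_of_nonneg (fun m => by positivity) hwsum]
        exact ENNReal.ofReal_lt_top
      exact ENNReal.mul_lt_top aux_moment hksum
    have hmeas2 : Measurable (fun ω => ∑' m, (‖Y m ω‖₊ : ℝ≥0∞)) :=
      Measurable.ennreal_tsum (fun m => ((hYmeas m).enorm : Measurable fun ω => (‖Y m ω‖₊ : ℝ≥0∞)))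
    filter_upwards [ae_lt_top hmeas2 hlint.ne] with ω hω
    exact Summable.of_nnnorm (ENNReal.tsum_coe_ne_top_iff_summable.mp hω.ne)
  -- independence of Y
  have hYindep : iIndepFun Y μ := by
    have := hindep.comp (fun m (y : ℝ) => y / (2 * (m : ℝ) + 1) ^ 2)
      (fun m => measurable_id.div_const _)
    exact this
  -- per-n integral
  have hprod : ∀ n : ℕ, ∫ ω, Real.exp (-(c * ∑ m ∈ Finset.range n, Y m ω)) ∂μ
      = ∏ m ∈ Finset.range n, (1 + c / (2 * (m : ℝ) + 1) ^ 2)⁻¹ := by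
    intro n
    have hmgf := hYindep.mgf_sum hYmeas (Finset.range n) (t := -c)
    have hL : mgf (∑ m ∈ Finset.range n, Y m) μ (-c)
        = ∫ ω, Real.exp (-(c * ∑ m ∈ Finset.range n, Y m ω)) ∂μ := by
      unfold mgf
      congr 1
      funext ω
      simp only [Finset.sum_apply, neg_mul]
    have hR : ∀ m : ℕ, mgf (Y m) μ (-c) = (1 + c / (2 * (m : ℝ) + 1) ^ 2)⁻¹ := by
      intro m
      have hb : 0 ≤ c / (2 * (m : ℝ) + 1) ^ 2 := by positivity
      unfold mgf
      have hcont : Continuous (fun y : ℝ => Real.exp (-(c / (2 * (m : ℝ) + 1) ^ 2 * y))) :=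
        Real.continuous_exp.comp ((continuous_const.mul continuous_id).neg)
      have hpt : (fun ω => Real.exp (-c * Y m ω))
          = fun ω => Real.exp (-(c / (2 * (m : ℝ) + 1) ^ 2 * E m ω)) := by
        funext ω
        simp only [hY]
        congr 1
        field_simp
      have hmap : ∫ ω, Real.exp (-(c / (2 * (m : ℝ) + 1) ^ 2 * E m ω)) ∂μ
          = ∫ y, Real.exp (-(c / (2 * (m : ℝ) + 1) ^ 2 * y)) ∂(μ.map (E m)) :=
        (integral_map (hmeas m).aemeasurable hcont.aestronglyMeasurable).symm
      rw [hpt, hmap, hdist m, aux_integral_exp_neg _ hb]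
    rw [hL] at hmgf
    rw [hmgf]
    exact Finset.prod_congr rfl (fun m _ => hR m)
  -- dominated convergence
  have hTend : Tendsto (fun n => ∫ ω, Real.exp (-(c * ∑ m ∈ Finset.range n, Y m ω)) ∂μ) atTop
      (nhds (∫ ω, Real.exp (-(c * ∑' m, Y m ω)) ∂μ)) := by
    refine tendsto_integral_of_dominated_convergence (fun _ => (1 : ℝ)) ?_ (integrable_const 1) ?_ ?_
    · intro n
      exact Measurable.aestronglyMeasurable (by measurability)
    · intro n
      filter_upwards [hnn] with ω hω
      rw [Real.norm_of_nonneg (exp_pos _).le, Real.exp_le_one_iff]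
      have hs : 0 ≤ ∑ m ∈ Finset.range n, Y m ω :=
        Finset.sum_nonneg (fun m _ => div_nonneg (hω m) (by positivity))
      nlinarith [mul_nonneg hc0 hs]
    · filter_upwards [hae_sum] with ω hω
      exact (Real.continuous_exp.tendsto _).comp
        (((hω.hasSum.tendsto_sum_nat).const_mul c).neg)
  -- product limit
  have hlim2 : Tendsto (fun n => ∏ m ∈ Finset.range n, (1 + c / (2 * (m : ℝ) + 1) ^ 2)⁻¹) atTop
      (nhds (Real.cosh (x / 2))⁻¹) := by
    have h := (aux_cosh_prod (x / 2)).inv₀ (Real.cosh_pos (x / 2)).ne'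
    refine h.congr (fun n => ?_)
    rw [← Finset.prod_inv_distrib]
    refine Finset.prod_congr rfl (fun m _ => ?_)
    congr 1
    rw [hc]
    have hm : (2 * (m : ℝ) + 1) ≠ 0 := by positivity
    field_simp
    ring
  have hI : ∫ ω, Real.exp (-(c * ∑' m, Y m ω)) ∂μ = (Real.cosh (x / 2))⁻¹ :=
    tendsto_nhds_unique (hTend.congr hprod) hlim2
  have hrw : (fun ω => Real.exp (-(x ^ 2 * ((2 / π ^ 2) * ∑' m : ℕ, E m ω / (2 * (m : ℝ) + 1) ^ 2)) / 2))
      = fun ω => Real.exp (-(c * ∑' m, Y m ω)) := by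
    funext ω
    congr 1
    simp only [hY, hc]
    field_simp
  rw [hrw, hI]
  have h1 : Real.exp (x / 2) * Real.exp (x / 2) = Real.exp x := by
    rw [← Real.exp_add]; congr 1; ring
  have h2 : Real.exp (x / 2) * Real.exp (-(x / 2)) = 1 := by
    rw [← Real.exp_add]; simp
  have h3 : Real.exp (-x / 2) * Real.exp x = Real.exp (x / 2) := by
    rw [← Real.exp_add]; congr 1; ring
  have h4 : Real.exp (-(x / 2)) * Real.exp x = Real.exp (x / 2) := by
    rw [← Real.exp_add]; congr 1; ring
  have hx1 : (0:ℝ) < 1 + Real.exp x := by positivity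
  have hd : (0:ℝ) < Real.exp (x / 2) + Real.exp (-(x / 2)) := by positivity
  rcases ha with rfl | rfl
  · rw [Real.rpow_zero, Real.cosh_eq, show ((0:ℝ) - 1 / 2) * x = -(x / 2) by ring]
    field_simp
    linarith [h3, h4]
  · rw [Real.rpow_one, Real.cosh_eq, show ((1:ℝ) - 1 / 2) * x = x / 2 by ring]
    field_simp
    linarith [h3, h4]
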